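/- Let f : ℝ → ℝ be C², let α₀ ∈ ℝ, and consider a family f_α(x) with f_α C¹ jointly in (α, x), satisfying f_{α₀}(x₀) = x₀, ∂_x f_{α₀}(x₀) = 1, ∂²_x f_{α₀}(x₀) > 0, and ∂_α f_α(x₀)|_{α=α₀} > 0. Then there exist ᾱ > α₀ and an open neighborhood V of x₀ such that for every α ∈ (α₀, ᾱ), the map f_α has no fixed point in V. -/

import Mathlib

open Set Filter Topology

theorem saddle_node_no_fixed_points
    (f : ℝ → ℝ → ℝ) (α₀ x₀ : ℝ)
    (hjoint : ContDiff ℝ 1 (Function.uncurry f))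
    (hC2 : ContDiff ℝ 2 (f α₀))
    (hfix : f α₀ x₀ = x₀)
    (hd1 : deriv (f α₀) x₀ = 1)
    (hd2 : 0 < deriv (deriv (f α₀)) x₀)
    (hdα : 0 < deriv (fun α => f α x₀) α₀) :
    ∃ ᾱ > α₀, ∃ V : Set ℝ, IsOpen V ∧ x₀ ∈ V ∧
      ∀ α ∈ Set.Ioo α₀ ᾱ, ∀ x ∈ V, f α x ≠ x := by
  -- notation
  set g₀ : ℝ → ℝ := fun x => f α₀ x - x with hg₀def
  have hdiff0 : Differentiable ℝ (f α₀) := hC2.differentiable two_ne_zero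
  have hφ : ContDiff ℝ 1 (deriv (f α₀)) := by
    exact (contDiff_succ_iff_deriv.mp (by exact_mod_cast hC2 : ContDiff ℝ ((1:ℕ)+1) (f α₀))).2.2
  -- derivative of g₀
  have hg₀deriv : ∀ x, HasDerivAt g₀ (deriv (f α₀) x - 1) x := fun x =>
    ((hdiff0 x).hasDerivAt.sub (hasDerivAt_id x))
  have hg₀deriv' : ∀ x, deriv g₀ x = deriv (f α₀) x - 1 := fun x => (hg₀deriv x).deriv
  -- slope of φ := deriv (f α₀) near x₀
  have hφd : HasDerivAt (deriv (f α₀)) (deriv (deriv (f α₀)) x₀) x₀ :=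
    ((hφ.differentiable one_ne_zero) x₀).hasDerivAt
  have hslope : Tendsto (slope (deriv (f α₀)) x₀) (𝓝[≠] x₀) (𝓝 (deriv (deriv (f α₀)) x₀)) :=
    hasDerivAt_iff_tendsto_slope.mp hφd
  have hev : ∀ᶠ x in 𝓝[≠] x₀, 0 < slope (deriv (f α₀)) x₀ x :=
    hslope.eventually (eventually_gt_nhds hd2)
  -- local min of g₀ at x₀
  have hmin : IsLocalMin g₀ x₀ := by
    apply isLocalMin_of_deriv (f := g₀) (hg₀deriv x₀).continuousAt
    · exact Eventually.of_forall fun x => (hg₀deriv x).differentiableAt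
    · filter_upwards [nhdsLT_le_nhdsNE x₀ hev, self_mem_nhdsWithin] with x hx hx'
      rw [hg₀deriv']
      have hne : x - x₀ < 0 := sub_neg.mpr hx'
      have := hx
      rw [slope_def_field] at this
      -- slope = (φ x - φ x₀)/(x - x₀) > 0 and x - x₀ < 0 ⇒ φ x - φ x₀ < 0
      have h2 : (deriv (f α₀) x - deriv (f α₀) x₀) / (x - x₀) > 0 := by
        simpa [sub_div] using this
      rcases (div_pos_iff).mp h2 with ⟨h3, h4⟩ | ⟨h3, h4⟩
      · linarith
      · rw [hd1] at h3; linarith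
    · filter_upwards [nhdsGT_le_nhdsNE x₀ hev, self_mem_nhdsWithin] with x hx hx'
      rw [hg₀deriv']
      have hne : 0 < x - x₀ := sub_pos.mpr hx'
      rw [slope_def_field] at hx
      have h2 : (deriv (f α₀) x - deriv (f α₀) x₀) / (x - x₀) > 0 := by
        simpa [sub_div] using hx
      rcases (div_pos_iff).mp h2 with ⟨h3, h4⟩ | ⟨h3, h4⟩
      · rw [hd1] at h3; linarith
      · linarith
  have hg₀x₀ : g₀ x₀ = 0 := by simp [hg₀def, hfix]
  have hnonneg : ∀ᶠ x in 𝓝 x₀, 0 ≤ g₀ x := by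
    filter_upwards [hmin] with x hx; rw [hg₀x₀] at hx; exact hx
  obtain ⟨t, ht1, ht3, ht2⟩ := eventually_nhds_iff.mp hnonneg
  -- partial derivative in α
  set D : ℝ × ℝ → ℝ := fun p => fderiv ℝ (Function.uncurry f) p (1, 0) with hDdef
  have hDa : ∀ (α x : ℝ), HasDerivAt (fun a => f a x) (D (α, x)) α := by
    intro α x
    have hline : HasDerivAt (fun a : ℝ => (a, x)) ((1 : ℝ), (0 : ℝ)) α :=
      (hasDerivAt_id α).prodMk (hasDerivAt_const α x)
    exact ((hjoint.differentiable one_ne_zero (α, x)).hasFDerivAt.comp_hasDerivAt α hline)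
  have hDcont : Continuous D :=
    (hjoint.continuous_fderiv one_ne_zero).clm_apply continuous_const
  have hDpos : 0 < D (α₀, x₀) := by
    have := (hDa α₀ x₀).deriv
    rw [← this]; exact hdα
  -- open set where D is positive
  have hopen : IsOpen {p : ℝ × ℝ | 0 < D p} := isOpen_lt continuous_const hDcont
  obtain ⟨U, W, hU, hW, hαU, hxW, hUW⟩ := isOpen_prod_iff.mp hopen α₀ x₀ hDpos
  obtain ⟨ε, hε, hball⟩ := Metric.isOpen_iff.mp hU α₀ hαU
  refine ⟨α₀ + ε / 2, by linarith, W ∩ t, hW.inter ht3, ⟨hxW, ht2⟩, ?_⟩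
  rintro α ⟨hα1, hα2⟩ x ⟨hxW', hxt⟩
  -- MVT in α
  have hdiffa : ∀ a, HasDerivAt (fun a => f a x) (D (a, x)) a := fun a => hDa a x
  obtain ⟨ξ, hξ, hξeq⟩ := exists_deriv_eq_slope (fun a => f a x) hα1
    (fun a _ => (hdiffa a).continuousAt.continuousWithinAt)
    (fun a _ => (hdiffa a).differentiableAt.differentiableWithinAt)
  have hξU : ξ ∈ U := by
    apply hball
    rw [Metric.mem_ball, Real.dist_eq, abs_of_pos (by linarith [hξ.1] : (0:ℝ) < ξ - α₀)]
    linarith [hξ.2]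
  have hDξ : 0 < D (ξ, x) := hUW (Set.mk_mem_prod hξU hxW')
  have hderξ : deriv (fun a => f a x) ξ = D (ξ, x) := (hdiffa ξ).deriv
  rw [hderξ] at hξeq
  have hgap : 0 < f α x - f α₀ x := by
    have h1 : f α x - f α₀ x = D (ξ, x) * (α - α₀) := by
      have hne : α - α₀ ≠ 0 := sub_ne_zero.mpr hα1.ne'
      field_simp at hξeq
      linarith [hξeq]
    rw [h1]; exact mul_pos hDξ (by linarith)
  have hge : 0 ≤ f α₀ x - x := ht1 x hxt
  intro h
  rw [h] at hgap
  linarith
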